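/- Let 0 < s < k ≤ n be positive integers and L = {1, 2, …, s}. Suppose n > C(k², 2)·s. Let ℱ be an L-intersecting, k-uniform family of subsets of [n]. Then |ℱ| ≤ C(n−1, s). -/

import Mathlib

open Finset

/-- Injection lemma: if every member of `ℱ` contains `p`, members have size `k`,
pairwise intersections have size ≤ `s`, and `j + |p| = s + 1 ≤ k`, then
`|ℱ| ≤ C(n - |p|, j)`, by mapping each `F` to a canonical `j`-subset of `F \ p`. -/
lemma inj_bound {n : ℕ} (k s j : ℕ) (ℱ : Finset (Finset (Fin n))) (p : Finset (Fin n))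
    (huni : ∀ F ∈ ℱ, F.card = k)
    (hsub : ∀ F ∈ ℱ, p ⊆ F)
    (hint : ∀ E ∈ ℱ, ∀ F ∈ ℱ, E ≠ F → (E ∩ F).card ≤ s)
    (hj : j + p.card = s + 1) (hjk : j + p.card ≤ k) :
    ℱ.card ≤ (n - p.card).choose j := by
  classical
  set f : Finset (Fin n) → Finset (Fin n) := fun F =>
    if h : j ≤ (F \ p).card then (Finset.exists_subset_card_eq (s := F \ p) (n := j) h).choose else ∅ with hf
  have key : ∀ F ∈ ℱ, f F ⊆ F \ p ∧ (f F).card = j := by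
    intro F hF
    have hc : (F \ p).card = k - p.card := by
      rw [Finset.card_sdiff_of_subset (hsub F hF), huni F hF]
    have hle : j ≤ (F \ p).card := by omega
    simp only [hf, dif_pos hle]
    exact ⟨(Finset.exists_subset_card_eq (s := F \ p) (n := j) hle).choose_spec.1,
      (Finset.exists_subset_card_eq (s := F \ p) (n := j) hle).choose_spec.2⟩
  have hmain := Finset.card_le_card_of_injOn (s := ℱ)
    (t := ((Finset.univ : Finset (Fin n)) \ p).powersetCard j) f ?_ ?_
  · rwa [Finset.card_powersetCard, Finset.card_sdiff_of_subset (Finset.subset_univ p),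
      Finset.card_univ, Fintype.card_fin] at hmain
  · intro F hF
    exact Finset.mem_powersetCard.mpr
      ⟨(key F hF).1.trans (Finset.sdiff_subset_sdiff (Finset.subset_univ F) le_rfl),
        (key F hF).2⟩
  · intro F hF F' hF' hEq
    by_contra hne
    have h1 : f F ∪ p ⊆ F ∩ F' := by
      apply Finset.union_subset
      · apply Finset.subset_inter
        · exact (key F hF).1.trans sdiff_subset
        · rw [hEq]; exact (key F' hF').1.trans sdiff_subset
      · exact Finset.subset_inter (hsub F hF) (hsub F' hF')
    have hdisj : Disjoint (f F) p :=
      Finset.disjoint_of_subset_left (key F hF).1 sdiff_disjoint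
    have hcard : (f F ∪ p).card = s + 1 := by
      rw [Finset.card_union_of_disjoint hdisj, (key F hF).2, hj]
    have h2 : s + 1 ≤ (F ∩ F').card := hcard ▸ Finset.card_le_card h1
    have h3 := hint F hF F' hF' hne
    omega

/-- Uniform Frankl–Füredi: if 0 < s < k ≤ n, n > C(k²,2)·s, and ℱ is a
{1,…,s}-intersecting k-uniform family of subsets of [n], then |ℱ| ≤ C(n-1, s). -/
theorem stmt_6 (n k s : ℕ) (hs : 0 < s) (hsk : s < k) (hkn : k ≤ n)
    (hn : (k ^ 2).choose 2 * s < n)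
    (ℱ : Finset (Finset (Fin n)))
    (huniform : ∀ F ∈ ℱ, F.card = k)
    (hL : ∀ E ∈ ℱ, ∀ F ∈ ℱ, E ≠ F → (E ∩ F).card ∈ Finset.Icc 1 s) :
    ℱ.card ≤ (n - 1).choose s := by
  classical
  have hint : ∀ E ∈ ℱ, ∀ F ∈ ℱ, E ≠ F → (E ∩ F).card ≤ s := fun E hE F hF hne =>
    (Finset.mem_Icc.mp (hL E hE F hF hne)).2
  have hk : 0 < k := lt_trans hs hsk
  have hk2 : 2 ≤ k := by omega
  have hck : 6 ≤ (k ^ 2).choose 2 := by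
    calc (6 : ℕ) = (4 : ℕ).choose 2 := by decide
    _ ≤ (k^2).choose 2 := Nat.choose_le_choose 2 (by nlinarith)
  have hn2 : 7 ≤ n := by nlinarith [hck, hs, hn]
  rcases Finset.eq_empty_or_nonempty ℱ with hE | ⟨F₁, hF₁⟩
  · simp [hE]
  by_cases hstar : ∃ x, ∀ F ∈ ℱ, x ∈ F
  · obtain ⟨x, hx⟩ := hstar
    have := inj_bound k s s ℱ {x} huniform
      (fun F hF => Finset.singleton_subset_iff.mpr (hx F hF)) hint
      (by simp) (by simp; omega)
    simpa using this
  -- non-star case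
  push_neg at hstar
  choose g hg1 hg2 using hstar
  set U : Finset (Fin n) := F₁ ∪ F₁.biUnion (fun y => g y) with hU
  have hmeet : ∀ F ∈ ℱ, ∀ G ∈ ℱ, (F ∩ G).Nonempty := by
    intro F hF G hG
    by_cases h : F = G
    · subst h
      rw [Finset.inter_self]
      exact Finset.card_pos.mp (by rw [huniform F hF]; omega)
    · have h1 := (Finset.mem_Icc.mp (hL F hF G hG h)).1
      exact Finset.card_pos.mp (by omega)
  -- every member of ℱ contains a 2-subset of U
  have hU2 : ∀ F ∈ ℱ, ∃ q ∈ U.powersetCard 2, q ⊆ F := by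
    intro F hF
    have h2 : 2 ≤ (F ∩ U).card := by
      by_contra hlt
      push_neg at hlt
      have hone : ∀ a ∈ F ∩ U, ∀ b ∈ F ∩ U, a = b := Finset.card_le_one.mp (by omega)
      obtain ⟨y, hy⟩ := hmeet F hF F₁ hF₁
      have hyF₁ : y ∈ F₁ := (Finset.mem_inter.mp hy).2
      have hyU : y ∈ F ∩ U :=
        Finset.mem_inter.mpr ⟨(Finset.mem_inter.mp hy).1, Finset.mem_union_left _ hyF₁⟩
      obtain ⟨z, hz⟩ := hmeet F hF (g y) (hg1 y)
      have hzU : z ∈ F ∩ U := by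
        refine Finset.mem_inter.mpr ⟨(Finset.mem_inter.mp hz).1, Finset.mem_union_right _ ?_⟩
        exact Finset.mem_biUnion.mpr ⟨y, hyF₁, (Finset.mem_inter.mp hz).2⟩
      have hyz : y = z := hone y hyU z hzU
      exact hg2 y (hyz ▸ (Finset.mem_inter.mp hz).2)
    obtain ⟨q, hq, hq2⟩ := Finset.exists_subset_card_eq (s := F ∩ U) (n := 2) h2
    exact ⟨q, Finset.mem_powersetCard.mpr ⟨hq.trans Finset.inter_subset_right, hq2⟩,
      hq.trans Finset.inter_subset_left⟩
  -- |U| ≤ k²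
  have hUcard : U.card ≤ k ^ 2 := by
    have h1 : ∀ y ∈ F₁, (g y \ F₁).card ≤ k - 1 := by
      intro y hy
      by_cases hgy : g y = F₁
      · simp [hgy]
      · have hne : (g y ∩ F₁).Nonempty := hmeet _ (hg1 y) _ hF₁
        have hc := Finset.card_sdiff_add_card_inter (g y) F₁
        have hc1 : 1 ≤ (g y ∩ F₁).card := Finset.card_pos.mpr hne
        have hgc := huniform _ (hg1 y)
        omega
    have hsub2 : U ⊆ F₁ ∪ F₁.biUnion (fun y => g y \ F₁) := by
      intro a ha
      rcases Finset.mem_union.mp ha with h | h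
      · exact Finset.mem_union_left _ h
      · obtain ⟨y, hy, hag⟩ := Finset.mem_biUnion.mp h
        by_cases haF : a ∈ F₁
        · exact Finset.mem_union_left _ haF
        · exact Finset.mem_union_right _
            (Finset.mem_biUnion.mpr ⟨y, hy, Finset.mem_sdiff.mpr ⟨hag, haF⟩⟩)
    have hF₁c : F₁.card = k := huniform F₁ hF₁
    calc U.card ≤ (F₁ ∪ F₁.biUnion (fun y => g y \ F₁)).card := Finset.card_le_card hsub2
      _ ≤ F₁.card + (F₁.biUnion (fun y => g y \ F₁)).card := Finset.card_union_le _ _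
      _ ≤ F₁.card + ∑ y ∈ F₁, (g y \ F₁).card := by
          exact Nat.add_le_add_left (Finset.card_biUnion_le) _
      _ ≤ k + ∑ y ∈ F₁, (k - 1) := by
          rw [hF₁c]
          exact Nat.add_le_add_left (Finset.sum_le_sum h1) _
      _ = k + k * (k - 1) := by rw [Finset.sum_const, hF₁c, smul_eq_mul]
      _ ≤ k ^ 2 := by
          obtain ⟨m, rfl⟩ : ∃ m, k = m + 1 := ⟨k - 1, by omega⟩
          simp only [Nat.add_sub_cancel]
          nlinarith
  -- cover ℱ by pair-stars
  have hcover : ℱ ⊆ (U.powersetCard 2).biUnion (fun p => ℱ.filter fun F => p ⊆ F) := by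
    intro F hF
    obtain ⟨q, hq, hqF⟩ := hU2 F hF
    exact Finset.mem_biUnion.mpr ⟨q, hq, Finset.mem_filter.mpr ⟨hF, hqF⟩⟩
  have hperp : ∀ q ∈ U.powersetCard 2,
      (ℱ.filter fun F => q ⊆ F).card ≤ (n - 2).choose (s - 1) := by
    intro q hq
    have hq2 : q.card = 2 := (Finset.mem_powersetCard.mp hq).2
    have := inj_bound k s (s - 1) (ℱ.filter fun F => q ⊆ F) q
      (fun F hF => huniform F (Finset.mem_filter.mp hF).1)
      (fun F hF => (Finset.mem_filter.mp hF).2)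
      (fun E hE F hF hne => hint E (Finset.mem_filter.mp hE).1 F (Finset.mem_filter.mp hF).1 hne)
      (by omega) (by omega)
    rwa [hq2] at this
  have hcard : ℱ.card ≤ (k ^ 2).choose 2 * (n - 2).choose (s - 1) := by
    calc ℱ.card ≤ ((U.powersetCard 2).biUnion (fun p => ℱ.filter fun F => p ⊆ F)).card :=
          Finset.card_le_card hcover
      _ ≤ ∑ q ∈ U.powersetCard 2, (ℱ.filter fun F => q ⊆ F).card := Finset.card_biUnion_le
      _ ≤ ∑ _q ∈ U.powersetCard 2, (n - 2).choose (s - 1) := Finset.sum_le_sum hperp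
      _ = (U.card.choose 2) * (n - 2).choose (s - 1) := by
          rw [Finset.sum_const, Finset.card_powersetCard, smul_eq_mul]
      _ ≤ (k ^ 2).choose 2 * (n - 2).choose (s - 1) :=
          Nat.mul_le_mul_right _ (Nat.choose_le_choose 2 hUcard)
  -- final arithmetic
  have hid : (n - 1) * (n - 2).choose (s - 1) = (n - 1).choose s * s := by
    have h := Nat.add_one_mul_choose_eq (n - 2) (s - 1)
    rw [show n - 2 + 1 = n - 1 by omega, show s - 1 + 1 = s by omega] at h
    exact h
  have hfin : (k ^ 2).choose 2 * (n - 2).choose (s - 1) ≤ (n - 1).choose s := by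
    have hmul : ((k ^ 2).choose 2 * (n - 2).choose (s - 1)) * s ≤ (n - 1).choose s * s := by
      calc ((k ^ 2).choose 2 * (n - 2).choose (s - 1)) * s
          = ((k ^ 2).choose 2 * s) * (n - 2).choose (s - 1) := by ring
        _ ≤ (n - 1) * (n - 2).choose (s - 1) := Nat.mul_le_mul_right _ (by omega)
        _ = (n - 1).choose s * s := hid
    exact Nat.le_of_mul_le_mul_right hmul hs
  exact hcard.trans hfin
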